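/- Let λ > 0 satisfy: for all agents i and bundles S,T ⊆ [m], if v_i(S) − v_i(T) > 0 then v_i(S) − v_i(T) ≥ λ. Let 0 < ε < λ/(2m), and let v̄ be a perturbed valuation profile on items {1,…,m+1} with v̄_i(m+1) = λ/2 for all i and, for j ≤ m, v_i(j) − ε ≤ v̄_i(j) ≤ v_i(j). Suppose an allocation A = (A_1,…,A_n) of {1,…,m+1} satisfies v̄_i(A_i Δ S_i) ≥ v̄_i(A_j) for some fixed agent i, a set S_i of at most one item, and all agents j. Then v_i((A_i ∖ {m+1}) Δ (S_i ∖ {m+1})) ≥ v_i(A_j ∖ {m+1}) for all agents j. -/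

import Mathlib

open Finset

/-- Value of a bundle under an additive valuation. -/
def bval {α : Type*} (u : α → ℝ) (S : Finset α) : ℝ := ∑ j ∈ S, u j

/-- An allocation: every item belongs to exactly one agent's bundle. -/
def IsAlloc {n : ℕ} {I : Type*} (A : Fin n → Finset I) : Prop :=
  ∀ j : I, ∃! i : Fin n, j ∈ A i

/-- Remove the added item `m+1` from a bundle of the enlarged instance,
viewing the result as a bundle of the original `m` items. -/
noncomputable def drop {m : ℕ} (S : Finset (Fin (m+1))) : Finset (Fin m) :=
  S.preimage Fin.castSucc (Fin.castSucc_injective m).injOn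

lemma drop_symmDiff {m : ℕ} (A B : Finset (Fin (m+1))) :
    drop (symmDiff A B) = symmDiff (drop A) (drop B) := by
  ext j
  simp [drop, Finset.mem_symmDiff]

lemma drop_image {m : ℕ} (T : Finset (Fin (m+1))) :
    (drop T).image Fin.castSucc = T.erase (Fin.last m) := by
  ext x
  simp only [Finset.mem_image, drop, Finset.mem_preimage, Finset.mem_erase]
  constructor
  · rintro ⟨j, hj, rfl⟩
    exact ⟨by simp [Fin.ext_iff, Fin.castSucc_lt_last j |>.ne], hj⟩
  · rintro ⟨hx, hxT⟩
    rcases Fin.exists_castSucc_eq.2 hx with ⟨j, rfl⟩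
    exact ⟨j, hxT, rfl⟩

lemma bval_split {m : ℕ} (u : Fin (m+1) → ℝ) (T : Finset (Fin (m+1))) :
    bval u T = (∑ j ∈ drop T, u j.castSucc)
      + (if Fin.last m ∈ T then u (Fin.last m) else 0) := by
  have h1 : (∑ j ∈ drop T, u j.castSucc) = ∑ x ∈ T.erase (Fin.last m), u x := by
    rw [← drop_image, Finset.sum_image]
    intro a _ b _ h
    exact (Fin.castSucc_injective m) h
  rw [h1]
  by_cases h : Fin.last m ∈ T
  · rw [if_pos h, Finset.sum_erase_add _ _ h]; rfl
  · rw [if_neg h, Finset.erase_eq_of_notMem h, add_zero]; rfl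

/-- if agent `i` is IEF1-satisfied (via the set `S` of at most one
item) in the perturbed instance, then after removing the item `m+1` agent `i`
is IEF1-satisfied (via `S ∖ {m+1}`) in the original instance. -/
theorem stmt5 (n m : ℕ) (v : Fin n → Fin m → ℝ) (vb : Fin n → Fin (m+1) → ℝ)
    (lam ε : ℝ) (hlam : 0 < lam)
    (hgap : ∀ (i : Fin n) (S T : Finset (Fin m)),
      0 < bval (v i) S - bval (v i) T → lam ≤ bval (v i) S - bval (v i) T)
    (hε0 : 0 < ε) (hε : ε < lam / (2 * m))
    (hlast : ∀ i, vb i (Fin.last m) = lam / 2)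
    (hpert : ∀ (i : Fin n) (j : Fin m),
      v i j - ε ≤ vb i j.castSucc ∧ vb i j.castSucc ≤ v i j)
    (A : Fin n → Finset (Fin (m+1))) (hA : IsAlloc A)
    (i : Fin n) (S : Finset (Fin (m+1))) (hS : S.card ≤ 1)
    (hIEF : ∀ j : Fin n, bval (vb i) (A j) ≤ bval (vb i) (symmDiff (A i) S)) :
    ∀ j : Fin n, bval (v i) (drop (A j)) ≤ bval (v i) (symmDiff (drop (A i)) (drop S)) := by
  -- m > 0
  have hm : 0 < m := by
    by_contra h
    have : m = 0 := by omega
    subst this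
    simp at hε
    linarith
  have hεm : ε * m < lam / 2 := by
    have h2m : (0:ℝ) < 2 * m := by positivity
    calc ε * m < lam / (2 * m) * m := by
          apply mul_lt_mul_of_pos_right hε (by exact_mod_cast hm)
      _ = lam / 2 := by field_simp
  -- bounds on perturbed sums
  have hub : ∀ T : Finset (Fin (m+1)),
      (∑ j ∈ drop T, vb i j.castSucc) ≤ bval (v i) (drop T) := by
    intro T
    exact Finset.sum_le_sum fun j _ => (hpert i j).2
  have hlb : ∀ T : Finset (Fin (m+1)),
      bval (v i) (drop T) - ε * m ≤ (∑ j ∈ drop T, vb i j.castSucc) := by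
    intro T
    have h1 : bval (v i) (drop T) - (∑ j ∈ drop T, vb i j.castSucc)
        = ∑ j ∈ drop T, (v i j - vb i j.castSucc) := by
      rw [Finset.sum_sub_distrib]; rfl
    have h2 : ∑ j ∈ drop T, (v i j - vb i j.castSucc) ≤ ∑ _j ∈ drop T, ε :=
      Finset.sum_le_sum fun j _ => by linarith [(hpert i j).1]
    have h3 : (∑ _j ∈ drop T, ε) = (drop T).card * ε := by
      rw [Finset.sum_const, nsmul_eq_mul]
    have h4 : ((drop T).card : ℝ) ≤ m := by
      have := Finset.card_le_card (Finset.subset_univ (drop T))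
      simp at this
      exact_mod_cast this
    have h5 : (drop T).card * ε ≤ ε * m := by
      rw [mul_comm]
      exact mul_le_mul_of_nonneg_left h4 hε0.le
    linarith
  intro j
  by_contra hcon
  push_neg at hcon
  set X := symmDiff (drop (A i)) (drop S) with hX
  have hgapj := hgap i (drop (A j)) X (by linarith)
  have hIEFj := hIEF j
  rw [bval_split, bval_split] at hIEFj
  have hlbj := hlb (A j)
  have hub2 := hub (symmDiff (A i) S)
  rw [drop_symmDiff] at hub2
  have hcj : (0:ℝ) ≤ (if Fin.last m ∈ A j then vb i (Fin.last m) else 0) := by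
    split
    · rw [hlast i]; linarith
    · linarith
  have hc : (if Fin.last m ∈ symmDiff (A i) S then vb i (Fin.last m) else 0) ≤ lam / 2 := by
    split
    · rw [hlast i]
    · linarith
  rw [drop_symmDiff, ← hX] at hIEFj
  rw [← hX] at hub2
  linarith
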